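/- arXiv:1307.2475 — 3 statements merged into one kernel-verified Lean document; each statement's English description precedes it below -/
import Mathlib

section
/- Let K be a compact group, π a strongly continuous isometric representation of K on a Banach space X, and m a finite signed Borel measure on K. Then ‖π(m)‖_{B(X)} ≤ ‖λ(m) ⊗ Id_X‖_{B(L²(K;X))}, where λ is the left regular representation of K on L²(K). -/
open MeasureTheory

/-- The normalized (probability) Haar measure on a compact group. -/
noncomputable def haarP (K : Type*) [Group K] [TopologicalSpace K] [IsTopologicalGroup K]
    [CompactSpace K] [T2Space K] [MeasurableSpace K] [BorelSpace K] : Measure K :=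
  ((Measure.haar : Measure K) Set.univ)⁻¹ • (Measure.haar : Measure K)

/-- let `K` be a compact group, `π` a strongly continuous isometric
representation of `K` on a Banach space `X`, and `m = m₊ − m₋` a finite signed Borel
measure on `K`.  Then `‖π(m)‖_{B(X)} ≤ ‖λ(m) ⊗ Id_X‖_{B(L²(K;X))}`: for any constant
`B ≥ 0` dominating the vector-valued convolution operator `λ(m) ⊗ Id_X` (on the dense
set of continuous functions `F : K → X`, with respect to the `L²(K;X)`-norms for the
Haar probability measure), one has `‖π(m)ξ‖ ≤ B‖ξ‖` for every `ξ ∈ X`. -/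
theorem stmt3 {K : Type*} [Group K] [TopologicalSpace K] [IsTopologicalGroup K]
    [CompactSpace K] [T2Space K] [MeasurableSpace K] [BorelSpace K]
    {X : Type*} [NormedAddCommGroup X] [NormedSpace ℂ X] [CompleteSpace X]
    (π : K →* (X →L[ℂ] X))
    (hcont : ∀ ξ : X, Continuous fun k => π k ξ)
    (hiso : ∀ (k : K) (ξ : X), ‖π k ξ‖ = ‖ξ‖)
    (mp mm : Measure K) [IsFiniteMeasure mp] [IsFiniteMeasure mm]
    (B : ℝ) (hB : 0 ≤ B)
    (hconv : ∀ F : C(K, X),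
      ∫ k, ‖(∫ g, F (g⁻¹ * k) ∂mp) - (∫ g, F (g⁻¹ * k) ∂mm)‖ ^ 2 ∂(haarP K)
        ≤ B ^ 2 * ∫ k, ‖F k‖ ^ 2 ∂(haarP K)) :
    ∀ ξ : X, ‖(∫ g, π g ξ ∂mp) - (∫ g, π g ξ ∂mm)‖ ≤ B * ‖ξ‖ := by
  intro ξ
  have hprob : IsProbabilityMeasure (haarP K) := by
    constructor
    rw [haarP, Measure.smul_apply, smul_eq_mul]
    exact ENNReal.inv_mul_cancel (isOpen_univ.measure_pos Measure.haar Set.univ_nonempty).ne' (measure_ne_top _ _)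
  have hint : ∀ (μ : Measure K) [IsFiniteMeasure μ], Integrable (fun g => π g ξ) μ := by
    intro μ _
    exact ((hcont ξ)).integrable_of_hasCompactSupport (HasCompactSupport.of_compactSpace _)
  set F : C(K, X) := ⟨fun k => π k⁻¹ ξ, (hcont ξ).comp continuous_inv⟩ with hF
  have key : ∀ k : K, ((∫ g, F (g⁻¹ * k) ∂mp) - (∫ g, F (g⁻¹ * k) ∂mm))
      = π k⁻¹ ((∫ g, π g ξ ∂mp) - (∫ g, π g ξ ∂mm)) := by
    intro k
    have h1 : ∀ g : K, F (g⁻¹ * k) = π k⁻¹ (π g ξ) := by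
      intro g
      simp only [hF, ContinuousMap.coe_mk, mul_inv_rev, inv_inv, map_mul]
      rfl
    simp only [h1]
    rw [(π k⁻¹).integral_comp_comm (hint mp), (π k⁻¹).integral_comp_comm (hint mm),
      map_sub]
  have hL : ∀ k : K, ‖(∫ g, F (g⁻¹ * k) ∂mp) - (∫ g, F (g⁻¹ * k) ∂mm)‖ ^ 2
      = ‖(∫ g, π g ξ ∂mp) - (∫ g, π g ξ ∂mm)‖ ^ 2 := fun k => by rw [key k, hiso]
  have hR : ∀ k : K, ‖F k‖ ^ 2 = ‖ξ‖ ^ 2 := fun k => by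
    simp only [hF, ContinuousMap.coe_mk, hiso]
  have h2 := hconv F
  simp only [hL, hR, integral_const, hprob.measure_univ, ENNReal.toReal_one, probReal_univ, smul_eq_mul,
    one_mul] at h2
  have := Real.sqrt_le_sqrt h2
  rwa [Real.sqrt_sq (norm_nonneg _), ← mul_pow,
    Real.sqrt_sq (by positivity)] at this
end

section
/- Let G be a locally compact group and π a strongly continuous representation of G on a Banach space X by bounded invertible operators. Then the set Y of functionals x ∈ X* such that the map g ↦ π(g⁻¹)* x is norm-continuous from G to X* is a norm-closed linear subspace of X*, is invariant under π(g⁻¹)* for all g ∈ G, and is weak-* dense in X*. -/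
open NormedSpace

/-- The set of functionals `x ∈ X*` such that `g ↦ π(g⁻¹)* x` is norm-continuous. -/
def contraSet {G : Type*} [Group G] [TopologicalSpace G]
    {X : Type*} [NormedAddCommGroup X] [NormedSpace ℂ X]
    (π : G →* (X ≃L[ℂ] X)) : Set (StrongDual ℂ X) :=
  {x | Continuous fun g : G => x.comp ((π g⁻¹ : X ≃L[ℂ] X) : X →L[ℂ] X)}

open MeasureTheory Filter Set Topology Function Uniformity Pointwise

section
variable {G : Type*} [Group G] [TopologicalSpace G] [IsTopologicalGroup G]
    {X : Type*} [NormedAddCommGroup X] [NormedSpace ℂ X]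

omit [TopologicalSpace G] [IsTopologicalGroup G] in
lemma contra_comp (π : G →* (X ≃L[ℂ] X)) (x : StrongDual ℂ X) (a b : G) :
    x.comp ((π (a * b)⁻¹ : X ≃L[ℂ] X) : X →L[ℂ] X) =
      (x.comp ((π b⁻¹ : X ≃L[ℂ] X) : X →L[ℂ] X)).comp ((π a⁻¹ : X ≃L[ℂ] X) : X →L[ℂ] X) := by
  ext ξ
  show x ((π (a*b)⁻¹) ξ) = x ((π b⁻¹) ((π a⁻¹) ξ))
  rw [mul_inv_rev, map_mul]
  rfl

lemma contra_bound [CompleteSpace X] (π : G →* (X ≃L[ℂ] X))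
    (hcont : ∀ ξ : X, Continuous fun g => π g ξ) {K : Set G} (hK : IsCompact K) :
    ∃ C : ℝ, 1 ≤ C ∧ ∀ g ∈ K, ‖((π g⁻¹ : X ≃L[ℂ] X) : X →L[ℂ] X)‖ ≤ C := by
  obtain ⟨C', hC'⟩ := banach_steinhaus
    (g := fun i : K => ((π (i : G)⁻¹ : X ≃L[ℂ] X) : X →L[ℂ] X)) (by
      intro ξ
      obtain ⟨C, hC⟩ := hK.exists_bound_of_continuousOn
        (((hcont ξ).comp continuous_inv).continuousOn : ContinuousOn (fun g : G => π g⁻¹ ξ) K)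
      exact ⟨C, fun i => hC i i.2⟩)
  exact ⟨max C' 1, le_max_right _ _, fun g hg => le_trans (hC' ⟨g, hg⟩) (le_max_left _ _)⟩

lemma contra_unif {ψ : G → ℝ} (hc : Continuous ψ) (hs : HasCompactSupport ψ)
    {δ : ℝ} (hδ : 0 < δ) :
    ∃ W ∈ 𝓝 (1 : G), ∀ h ∈ W, ∀ g : G, |ψ (h⁻¹ * g) - ψ g| ≤ δ := by
  letI : UniformSpace G := IsTopologicalGroup.rightUniformSpace G
  have huc : UniformContinuous ψ := hs.uniformContinuous_of_continuous hc
  have hent : {p : ℝ × ℝ | dist p.1 p.2 < δ} ∈ 𝓤 ℝ := Metric.dist_mem_uniformity hδ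
  have hpre := huc hent
  rw [Filter.mem_map] at hpre
  rw [uniformity_eq_comap_nhds_one' G, Filter.mem_comap] at hpre
  obtain ⟨V, hV, hVsub⟩ := hpre
  have hinv : Tendsto (fun h : G => h⁻¹) (𝓝 1) (𝓝 1) := by
    simpa using (continuous_inv (G := G)).tendsto (1 : G)
  refine ⟨(fun h : G => h⁻¹) ⁻¹' V, hinv hV, fun h hh g => ?_⟩
  have hp : ((g, h⁻¹ * g) : G × G) ∈ (fun p : G × G => p.2 * p.1⁻¹) ⁻¹' V := by
    simpa [div_eq_mul_inv, mul_inv_cancel_right] using hh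
  have := hVsub hp
  simp only [mem_preimage, mem_setOf_eq, Real.dist_eq] at this
  rw [abs_sub_comm]
  exact this.le

set_option maxHeartbeats 1000000 in
lemma contra_approx [LocallyCompactSpace G] [CompleteSpace X]
    (π : G →* (X ≃L[ℂ] X)) (hcont : ∀ ξ : X, Continuous fun g => π g ξ)
    (x : StrongDual ℂ X) (s : Finset X) {ε : ℝ} (hε : 0 < ε) :
    ∃ y ∈ contraSet π, ∀ ξ ∈ s, ‖y ξ - x ξ‖ ≤ ε := by
  classical
  borelize G
  set μ : Measure G := MeasureTheory.Measure.haar with hμ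
  obtain ⟨V, hVc, hV1⟩ := exists_compact_mem_nhds (1 : G)
  have hev : ∀ ξ : X, Continuous fun g : G => x ((π g⁻¹ : X ≃L[ℂ] X) ξ) :=
    fun ξ => x.cont.comp ((hcont ξ).comp continuous_inv)
  have hU : ∀ᶠ g in 𝓝 (1 : G), ∀ ξ ∈ s, ‖x ((π g⁻¹ : X ≃L[ℂ] X) ξ) - x ξ‖ ≤ ε := by
    rw [eventually_all_finset]
    intro ξ hξ
    have h1 : Tendsto (fun g : G => x ((π g⁻¹ : X ≃L[ℂ] X) ξ)) (𝓝 1) (𝓝 (x ξ)) := by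
      have := (hev ξ).tendsto 1
      simp only [inv_one, map_one] at this
      exact this
    have h2 := h1.eventually_mem (Metric.closedBall_mem_nhds (x ξ) hε)
    refine h2.mono fun g hg => ?_
    simpa [Metric.mem_closedBall, dist_eq_norm] using hg
  set E := {g : G | ∀ ξ ∈ s, ‖x ((π g⁻¹ : X ≃L[ℂ] X) ξ) - x ξ‖ ≤ ε} ∩ V with hE
  have hEnh : E ∈ 𝓝 (1:G) := inter_mem hU hV1
  have hO1 : (1:G) ∈ interior E := mem_interior_iff_mem_nhds.2 hEnh
  obtain ⟨φ, hφ1, hφ0, hφcs, hφmem⟩ :=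
    exists_continuous_one_zero_of_isCompact (isCompact_singleton : IsCompact {(1:G)})
      (isOpen_interior.isClosed_compl)
      (disjoint_compl_right_iff_subset.mpr (singleton_subset_iff.2 hO1))
  have hφsupp : Function.support φ ⊆ interior E := by
    intro g hg
    by_contra hgo
    exact hg (hφ0 hgo)
  have hφint : Integrable (fun g => φ g) μ := φ.continuous.integrable_of_hasCompactSupport hφcs
  set c : ℝ := ∫ g, φ g ∂μ with hc
  have hφ11 : φ 1 = 1 := hφ1 rfl
  have hcpos : 0 < c := by
    rw [hc, integral_pos_iff_support_of_nonneg (fun g => (hφmem g).1) hφint]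
    have hop : IsOpen (Function.support φ) := by
      rw [Function.support_eq_preimage]
      exact isOpen_compl_singleton.preimage φ.continuous
    exact hop.measure_pos μ ⟨1, by simp [Function.mem_support, hφ11]⟩
  set ψ : G → ℝ := fun g => c⁻¹ * φ g with hψ
  have hψc : Continuous ψ := continuous_const.mul φ.continuous
  have hψsupport : Function.support ψ ⊆ Function.support φ := by
    intro g hg
    simp only [Function.mem_support] at hg ⊢
    intro h0
    exact hg (by simp [hψ, h0])
  have hψcs : HasCompactSupport ψ :=
    IsCompact.of_isClosed_subset hφcs (isClosed_tsupport ψ) (closure_mono hψsupport)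
  have hψ0 : ∀ g, 0 ≤ ψ g := fun g => mul_nonneg (inv_nonneg.2 hcpos.le) (hφmem g).1
  have hψint : Integrable ψ μ := hφint.const_mul _
  have hψ1 : ∫ g, ψ g ∂μ = 1 := by
    simp only [hψ]
    rw [integral_const_mul]
    exact inv_mul_cancel₀ hcpos.ne'
  set K := tsupport ψ with hK
  have hKc : IsCompact K := hψcs
  set Q := closure (V * K) with hQ
  have hQc : IsCompact Q := (hVc.mul hKc).closure
  have hQm : MeasurableSet Q := isClosed_closure.measurableSet
  have hKQ : K ⊆ Q := fun k hk => subset_closure ⟨1, mem_of_mem_nhds hV1, k, hk, one_mul k⟩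
  obtain ⟨C, hC1, hC⟩ := contra_bound π hcont hQc
  have hC0 : (0:ℝ) < C := lt_of_lt_of_le one_pos hC1
  have hpt : ∀ ξ : X, ∀ g ∈ Q, ‖x ((π g⁻¹ : X ≃L[ℂ] X) ξ)‖ ≤ C * ‖x‖ * ‖ξ‖ := by
    intro ξ g hg
    calc ‖x ((π g⁻¹ : X ≃L[ℂ] X) ξ)‖ ≤ ‖x‖ * ‖(π g⁻¹ : X ≃L[ℂ] X) ξ‖ := x.le_opNorm _
      _ ≤ ‖x‖ * (‖((π g⁻¹ : X ≃L[ℂ] X) : X →L[ℂ] X)‖ * ‖ξ‖) := by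
          gcongr
          exact ((π g⁻¹ : X ≃L[ℂ] X) : X →L[ℂ] X).le_opNorm ξ
      _ ≤ ‖x‖ * (C * ‖ξ‖) := by
          gcongr
          exact hC g hg
      _ = C * ‖x‖ * ‖ξ‖ := by ring
  have hInt : ∀ (ξ : X) (h : G),
      Integrable (fun g => ψ (h⁻¹ * g) • x ((π g⁻¹ : X ≃L[ℂ] X) ξ)) μ := by
    intro ξ h
    apply Continuous.integrable_of_hasCompactSupport
    · exact (hψc.comp (continuous_const.mul continuous_id)).smul (hev ξ)
    · have h1 : HasCompactSupport fun g : G => ψ (h⁻¹ * g) :=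
        hψcs.comp_homeomorph (Homeomorph.mulLeft h⁻¹)
      exact h1.smul_right
  have hInt1 : ∀ ξ : X, Integrable (fun g => ψ g • x ((π g⁻¹ : X ≃L[ℂ] X) ξ)) μ := by
    intro ξ
    simpa using hInt ξ 1
  set T : X →ₗ[ℂ] ℂ :=
    { toFun := fun ξ => ∫ g, ψ g • x ((π g⁻¹ : X ≃L[ℂ] X) ξ) ∂μ
      map_add' := by
        intro ξ η
        rw [← integral_add (hInt1 ξ) (hInt1 η)]
        refine integral_congr_ae (Eventually.of_forall fun g => ?_)
        simp only [map_add, smul_add]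
      map_smul' := by
        intro a ξ
        simp only [RingHom.id_apply]
        rw [← integral_smul]
        refine integral_congr_ae (Eventually.of_forall fun g => ?_)
        simp only [_root_.map_smul]
        rw [smul_comm] } with hT
  have hTbound : ∀ ξ, ‖T ξ‖ ≤ C * ‖x‖ * ‖ξ‖ := by
    intro ξ
    have h1 : ‖T ξ‖ ≤ ∫ g, ‖ψ g • x ((π g⁻¹ : X ≃L[ℂ] X) ξ)‖ ∂μ :=
      norm_integral_le_integral_norm _
    have h2 : ∫ g, ‖ψ g • x ((π g⁻¹ : X ≃L[ℂ] X) ξ)‖ ∂μ ≤ ∫ g, ψ g * (C * ‖x‖ * ‖ξ‖) ∂μ := by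
      apply integral_mono ((hInt1 ξ).norm) (hψint.mul_const _)
      intro g
      simp only [norm_smul, Real.norm_eq_abs, abs_of_nonneg (hψ0 g)]
      rcases eq_or_ne (ψ g) 0 with h | h
      · simp [h]
      · have hgK : g ∈ Q := hKQ (subset_tsupport ψ (Function.mem_support.2 h))
        exact mul_le_mul_of_nonneg_left (hpt ξ g hgK) (hψ0 g)
    calc ‖T ξ‖ ≤ ∫ g, ψ g * (C * ‖x‖ * ‖ξ‖) ∂μ := h1.trans h2
      _ = (∫ g, ψ g ∂μ) * (C * ‖x‖ * ‖ξ‖) := integral_mul_const _ _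
      _ = C * ‖x‖ * ‖ξ‖ := by rw [hψ1, one_mul]
  set y : StrongDual ℂ X := LinearMap.mkContinuous T (C * ‖x‖) (fun ξ => by
      simpa [mul_assoc] using hTbound ξ) with hy
  have hy_apply : ∀ ξ, y ξ = ∫ g, ψ g • x ((π g⁻¹ : X ≃L[ℂ] X) ξ) ∂μ := fun ξ => rfl
  have hkey : ∀ δ : ℝ, 0 < δ → ∃ W ∈ 𝓝 (1:G),
      ∀ h ∈ W, ‖y.comp ((π h⁻¹ : X ≃L[ℂ] X) : X →L[ℂ] X) - y‖ ≤ δ := by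
    intro δ hδ
    set A := C * ‖x‖ * (μ Q).toReal + 1 with hA
    have hm0 : 0 ≤ (μ Q).toReal := ENNReal.toReal_nonneg
    have hCx : 0 ≤ C * ‖x‖ := mul_nonneg hC0.le (norm_nonneg x)
    have hA0 : 0 < A := by positivity
    obtain ⟨W₀, hW₀, hW₀p⟩ := contra_unif hψc hψcs (div_pos hδ hA0)
    refine ⟨W₀ ∩ V, inter_mem hW₀ hV1, fun h hh => ?_⟩
    obtain ⟨hhW, hhV⟩ := hh
    apply ContinuousLinearMap.opNorm_le_bound _ hδ.le
    intro ξ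
    have e0 : (y.comp ((π h⁻¹ : X ≃L[ℂ] X) : X →L[ℂ] X)) ξ
        = ∫ g, ψ g • x ((π (h * g)⁻¹ : X ≃L[ℂ] X) ξ) ∂μ := by
      rw [ContinuousLinearMap.comp_apply, hy_apply]
      refine integral_congr_ae (Eventually.of_forall fun g => ?_)
      beta_reduce
      have hrw : (π (h * g)⁻¹ : X ≃L[ℂ] X) ξ = (π g⁻¹ : X ≃L[ℂ] X) ((π h⁻¹ : X ≃L[ℂ] X) ξ) := by
        rw [mul_inv_rev, map_mul]; rfl
      rw [hrw]
      rfl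
    have e1 : (y.comp ((π h⁻¹ : X ≃L[ℂ] X) : X →L[ℂ] X)) ξ
        = ∫ g, ψ (h⁻¹ * g) • x ((π g⁻¹ : X ≃L[ℂ] X) ξ) ∂μ := by
      rw [e0]
      have hh2 := integral_mul_left_eq_self (μ := μ)
        (fun g => ψ (h⁻¹ * g) • x ((π g⁻¹ : X ≃L[ℂ] X) ξ)) h
      rw [← hh2]
      refine integral_congr_ae (Eventually.of_forall fun g => ?_)
      beta_reduce
      rw [inv_mul_cancel_left]
    have e2 : (y.comp ((π h⁻¹ : X ≃L[ℂ] X) : X →L[ℂ] X) - y) ξ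
        = ∫ g, (ψ (h⁻¹ * g) - ψ g) • x ((π g⁻¹ : X ≃L[ℂ] X) ξ) ∂μ := by
      rw [ContinuousLinearMap.sub_apply, e1, hy_apply, ← integral_sub (hInt ξ h) (hInt1 ξ)]
      refine integral_congr_ae (Eventually.of_forall fun g => ?_)
      beta_reduce
      rw [sub_smul]
    rw [e2]
    have hb : ∀ g : G, ‖(ψ (h⁻¹ * g) - ψ g) • x ((π g⁻¹ : X ≃L[ℂ] X) ξ)‖
        ≤ Q.indicator (fun _ => (δ / A) * (C * ‖x‖ * ‖ξ‖)) g := by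
      intro g
      by_cases hg : g ∈ Q
      · rw [indicator_of_mem hg, norm_smul, Real.norm_eq_abs]
        exact mul_le_mul (hW₀p h hhW g) (hpt ξ g hg) (norm_nonneg _) (by positivity)
      · rw [indicator_of_notMem hg]
        have h1 : ψ g = 0 := by
          by_contra h0
          exact hg (hKQ (subset_tsupport ψ (Function.mem_support.2 h0)))
        have h2 : ψ (h⁻¹ * g) = 0 := by
          by_contra h0
          apply hg
          refine subset_closure ⟨h, hhV, h⁻¹ * g,
            subset_tsupport ψ (Function.mem_support.2 h0), ?_⟩
          simp
        simp [h1, h2]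
    calc ‖∫ g, (ψ (h⁻¹ * g) - ψ g) • x ((π g⁻¹ : X ≃L[ℂ] X) ξ) ∂μ‖
        ≤ ∫ g, ‖(ψ (h⁻¹ * g) - ψ g) • x ((π g⁻¹ : X ≃L[ℂ] X) ξ)‖ ∂μ :=
          norm_integral_le_integral_norm _
      _ ≤ ∫ g, Q.indicator (fun _ => (δ / A) * (C * ‖x‖ * ‖ξ‖)) g ∂μ := by
          have hIsub : Integrable
              (fun g => (ψ (h⁻¹ * g) - ψ g) • x ((π g⁻¹ : X ≃L[ℂ] X) ξ)) μ := by
            have := (hInt ξ h).sub (hInt1 ξ)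
            simpa [sub_smul, Pi.sub_def] using this
          exact integral_mono hIsub.norm
            ((integrableOn_const hQc.measure_lt_top.ne).integrable_indicator hQm) hb
      _ = (μ Q).toReal * ((δ / A) * (C * ‖x‖ * ‖ξ‖)) := by
          rw [integral_indicator_const _ hQm]
          rfl
      _ ≤ δ * ‖ξ‖ := by
          have h1 : (μ Q).toReal * ((δ / A) * (C * ‖x‖ * ‖ξ‖))
              = (δ / A) * (C * ‖x‖ * (μ Q).toReal) * ‖ξ‖ := by ring
          rw [h1]
          have h2 : C * ‖x‖ * (μ Q).toReal ≤ A := by rw [hA]; linarith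
          have h3 : (δ / A) * (C * ‖x‖ * (μ Q).toReal) * ‖ξ‖ ≤ (δ / A) * A * ‖ξ‖ := by
            gcongr
          refine h3.trans (le_of_eq ?_)
          rw [div_mul_cancel₀ _ hA0.ne']
  have hmem : y ∈ contraSet π := by
    show Continuous fun g : G => y.comp ((π g⁻¹ : X ≃L[ℂ] X) : X →L[ℂ] X)
    rw [continuous_iff_continuousAt]
    intro h₀
    rw [ContinuousAt, Metric.tendsto_nhds]
    intro ε' hε'
    set c₀ := ‖((π h₀⁻¹ : X ≃L[ℂ] X) : X →L[ℂ] X)‖ with hc₀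
    have hc₀0 : 0 ≤ c₀ := norm_nonneg _
    obtain ⟨W, hW, hWp⟩ := hkey (ε' / 2 / (c₀ + 1)) (by positivity)
    have ht : Tendsto (fun h : G => h₀⁻¹ * h) (𝓝 h₀) (𝓝 1) := by
      have hcm : Continuous fun h : G => h₀⁻¹ * h := continuous_const.mul continuous_id
      simpa using hcm.tendsto h₀
    filter_upwards [mem_map.1 (ht hW)] with h hh
    have e : y.comp ((π h⁻¹ : X ≃L[ℂ] X) : X →L[ℂ] X)
        = (y.comp ((π (h₀⁻¹ * h)⁻¹ : X ≃L[ℂ] X) : X →L[ℂ] X)).comp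
            ((π h₀⁻¹ : X ≃L[ℂ] X) : X →L[ℂ] X) := by
      rw [← contra_comp]
      rw [mul_inv_cancel_left]
    rw [dist_eq_norm, e, ← ContinuousLinearMap.sub_comp]
    calc ‖(y.comp ((π (h₀⁻¹ * h)⁻¹ : X ≃L[ℂ] X) : X →L[ℂ] X) - y).comp
            ((π h₀⁻¹ : X ≃L[ℂ] X) : X →L[ℂ] X)‖
        ≤ ‖y.comp ((π (h₀⁻¹ * h)⁻¹ : X ≃L[ℂ] X) : X →L[ℂ] X) - y‖ * c₀ :=
          ContinuousLinearMap.opNorm_comp_le _ _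
      _ ≤ (ε' / 2 / (c₀ + 1)) * c₀ := mul_le_mul_of_nonneg_right (hWp _ hh) hc₀0
      _ ≤ ε' / 2 := by
          rw [div_mul_eq_mul_div, div_le_iff₀ (by positivity : (0:ℝ) < c₀ + 1)]
          have : ε' / 2 * c₀ ≤ ε' / 2 * (c₀ + 1) := by nlinarith
          linarith
      _ < ε' := half_lt_self hε'
  refine ⟨y, hmem, fun ξ hξ => ?_⟩
  have e3 : x ξ = ∫ g, ψ g • x ξ ∂μ := by
    rw [integral_smul_const, hψ1, one_smul]
  have hInt2 : Integrable (fun g => ψ g • (x ((π g⁻¹ : X ≃L[ℂ] X) ξ) - x ξ)) μ := by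
    have := (hInt1 ξ).sub (hψint.smul_const (x ξ))
    simpa [smul_sub, Pi.sub_def] using this
  have e4 : y ξ - x ξ = ∫ g, ψ g • (x ((π g⁻¹ : X ≃L[ℂ] X) ξ) - x ξ) ∂μ := by
    calc y ξ - x ξ
        = (∫ g, ψ g • x ((π g⁻¹ : X ≃L[ℂ] X) ξ) ∂μ) - ∫ g, ψ g • x ξ ∂μ := by
          rw [hy_apply, ← e3]
      _ = ∫ g, (ψ g • x ((π g⁻¹ : X ≃L[ℂ] X) ξ) - ψ g • x ξ) ∂μ :=
          (integral_sub (hInt1 ξ) (hψint.smul_const _)).symm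
      _ = ∫ g, ψ g • (x ((π g⁻¹ : X ≃L[ℂ] X) ξ) - x ξ) ∂μ := by
          refine integral_congr_ae (Eventually.of_forall fun g => ?_)
          beta_reduce
          rw [smul_sub]
  rw [e4]
  calc ‖∫ g, ψ g • (x ((π g⁻¹ : X ≃L[ℂ] X) ξ) - x ξ) ∂μ‖
      ≤ ∫ g, ‖ψ g • (x ((π g⁻¹ : X ≃L[ℂ] X) ξ) - x ξ)‖ ∂μ := norm_integral_le_integral_norm _
    _ ≤ ∫ g, ψ g * ε ∂μ := by
        apply integral_mono hInt2.norm (hψint.mul_const _)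
        intro g
        simp only [norm_smul, Real.norm_eq_abs, abs_of_nonneg (hψ0 g)]
        rcases eq_or_ne (ψ g) 0 with h | h
        · simp [h]
        · have hφg : φ g ≠ 0 := by
            intro h0
            exact h (by simp [hψ, h0])
          have hgE : g ∈ E := interior_subset (hφsupp (Function.mem_support.2 hφg))
          exact mul_le_mul_of_nonneg_left (hgE.1 ξ hξ) (hψ0 g)
    _ = ε := by rw [integral_mul_const, hψ1, one_mul]

end

/-- for a strongly continuous representation `π` of a locally compact group `G`
on a Banach space `X`, the set `Y` of functionals `x ∈ X*` for which `g ↦ π(g⁻¹)* x` is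
norm-continuous is a norm-closed subspace of `X*`, invariant under all `π(g⁻¹)*`, and
weak-* dense in `X*`. -/
theorem stmt4 {G : Type*} [Group G] [TopologicalSpace G] [IsTopologicalGroup G]
    [LocallyCompactSpace G]
    {X : Type*} [NormedAddCommGroup X] [NormedSpace ℂ X] [CompleteSpace X]
    (π : G →* (X ≃L[ℂ] X)) (hcont : ∀ ξ : X, Continuous fun g => π g ξ) :
    IsClosed (contraSet π) ∧
    (∀ x ∈ contraSet π, ∀ y ∈ contraSet π, x + y ∈ contraSet π) ∧
    (∀ c : ℂ, ∀ x ∈ contraSet π, c • x ∈ contraSet π) ∧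
    (∀ g : G, ∀ x ∈ contraSet π, x.comp ((π g⁻¹ : X ≃L[ℂ] X) : X →L[ℂ] X) ∈ contraSet π) ∧
    Dense (StrongDual.toWeakDual '' contraSet π) := by
  refine ⟨?_, ?_, ?_, ?_, ?_⟩
  · -- closedness
    refine isClosed_of_closure_subset fun x hx => ?_
    show Continuous fun g : G => x.comp ((π g⁻¹ : X ≃L[ℂ] X) : X →L[ℂ] X)
    rw [continuous_iff_continuousAt]
    intro g₀
    obtain ⟨V, hVc, hV⟩ := exists_compact_mem_nhds g₀
    obtain ⟨C, hC1, hC⟩ := contra_bound π hcont hVc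
    have hC0 : (0:ℝ) < C := lt_of_lt_of_le one_pos hC1
    rw [ContinuousAt, Metric.tendsto_nhds]
    intro ε hε
    obtain ⟨y, hy, hxy⟩ := Metric.mem_closure_iff.1 hx (ε / 3 / C) (by positivity)
    have hd : ∀ g' ∈ V, dist (x.comp ((π g'⁻¹ : X ≃L[ℂ] X) : X →L[ℂ] X))
        (y.comp ((π g'⁻¹ : X ≃L[ℂ] X) : X →L[ℂ] X)) ≤ ε / 3 := by
      intro g' hg'
      rw [dist_eq_norm, ← ContinuousLinearMap.sub_comp]
      calc ‖(x - y).comp ((π g'⁻¹ : X ≃L[ℂ] X) : X →L[ℂ] X)‖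
          ≤ ‖x - y‖ * ‖((π g'⁻¹ : X ≃L[ℂ] X) : X →L[ℂ] X)‖ :=
            ContinuousLinearMap.opNorm_comp_le _ _
        _ ≤ (ε / 3 / C) * C := by
            have hxy' : ‖x - y‖ ≤ ε / 3 / C := by
              rw [← dist_eq_norm]; exact hxy.le
            exact mul_le_mul hxy' (hC g' hg') (norm_nonneg _) (by positivity)
        _ = ε / 3 := div_mul_cancel₀ _ hC0.ne'
    have hyc : Continuous fun g : G => y.comp ((π g⁻¹ : X ≃L[ℂ] X) : X →L[ℂ] X) := hy
    have h2 : ∀ᶠ g in 𝓝 g₀, dist (y.comp ((π g⁻¹ : X ≃L[ℂ] X) : X →L[ℂ] X))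
        (y.comp ((π g₀⁻¹ : X ≃L[ℂ] X) : X →L[ℂ] X)) < ε / 3 :=
      Metric.tendsto_nhds.1 (hyc.continuousAt) (ε / 3) (by positivity)
    filter_upwards [h2, hV] with g hg hgV
    have t1 := hd g hgV
    have t3 := hd g₀ (mem_of_mem_nhds hV)
    have tri := dist_triangle4 (x.comp ((π g⁻¹ : X ≃L[ℂ] X) : X →L[ℂ] X))
      (y.comp ((π g⁻¹ : X ≃L[ℂ] X) : X →L[ℂ] X))
      (y.comp ((π g₀⁻¹ : X ≃L[ℂ] X) : X →L[ℂ] X))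
      (x.comp ((π g₀⁻¹ : X ≃L[ℂ] X) : X →L[ℂ] X))
    rw [dist_comm (y.comp ((π g₀⁻¹ : X ≃L[ℂ] X) : X →L[ℂ] X))] at tri
    have := tri.trans_lt (by linarith : dist _ _ + dist _ _ + dist _ _ < ε)
    exact this
  · -- addition
    intro x hx y hy
    have hx' : Continuous fun g : G => x.comp ((π g⁻¹ : X ≃L[ℂ] X) : X →L[ℂ] X) := hx
    have hy' : Continuous fun g : G => y.comp ((π g⁻¹ : X ≃L[ℂ] X) : X →L[ℂ] X) := hy
    show Continuous fun g : G => (x + y).comp ((π g⁻¹ : X ≃L[ℂ] X) : X →L[ℂ] X)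
    have he : ∀ g : G, (x + y).comp ((π g⁻¹ : X ≃L[ℂ] X) : X →L[ℂ] X)
        = x.comp ((π g⁻¹ : X ≃L[ℂ] X) : X →L[ℂ] X)
          + y.comp ((π g⁻¹ : X ≃L[ℂ] X) : X →L[ℂ] X) :=
      fun g => ContinuousLinearMap.add_comp _ _ _
    simp only [he]
    exact hx'.add hy'
  · -- scalar multiplication
    intro c x hx
    have hx' : Continuous fun g : G => x.comp ((π g⁻¹ : X ≃L[ℂ] X) : X →L[ℂ] X) := hx
    show Continuous fun g : G => (c • x).comp ((π g⁻¹ : X ≃L[ℂ] X) : X →L[ℂ] X)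
    have he : ∀ g : G, (c • x).comp ((π g⁻¹ : X ≃L[ℂ] X) : X →L[ℂ] X)
        = c • (x.comp ((π g⁻¹ : X ≃L[ℂ] X) : X →L[ℂ] X)) :=
      fun g => ContinuousLinearMap.smul_comp _ _ _
    simp only [he]
    exact hx'.const_smul c
  · -- invariance
    intro g x hx
    have hx' : Continuous fun k : G => x.comp ((π k⁻¹ : X ≃L[ℂ] X) : X →L[ℂ] X) := hx
    show Continuous fun k : G =>
      (x.comp ((π g⁻¹ : X ≃L[ℂ] X) : X →L[ℂ] X)).comp ((π k⁻¹ : X ≃L[ℂ] X) : X →L[ℂ] X)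
    have he : ∀ k : G, (x.comp ((π g⁻¹ : X ≃L[ℂ] X) : X →L[ℂ] X)).comp
          ((π k⁻¹ : X ≃L[ℂ] X) : X →L[ℂ] X)
        = x.comp ((π (k * g)⁻¹ : X ≃L[ℂ] X) : X →L[ℂ] X) :=
      fun k => (contra_comp π x k g).symm
    simp only [he]
    exact hx'.comp (continuous_mul_right g)
  · -- weak-* density
    intro w
    rw [mem_closure_iff_nhds]
    intro t ht
    have hinj : Function.Injective (topDualPairing ℂ X) :=
      fun a b hab => ContinuousLinearMap.coe_injective hab
    have hnh := (WeakBilin.isEmbedding hinj).toIsInducing.nhds_eq_comap w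
    replace ht := (Filter.ext_iff.1 hnh t).1 ht
    replace ht := Filter.mem_comap.1 ht
    obtain ⟨S, hS, hSsub⟩ := ht
    rw [nhds_pi, Filter.mem_pi] at hS
    obtain ⟨I, hIf, tt, htt, httsub⟩ := hS
    have hchoice : ∀ ξ : X, ∃ e : ℝ, 0 < e ∧
        (ξ ∈ I → Metric.ball (topDualPairing ℂ X w ξ) e ⊆ tt ξ) := by
      intro ξ
      by_cases hξ : ξ ∈ I
      · obtain ⟨e, he, hsub⟩ := Metric.mem_nhds_iff.1 (htt ξ)
        exact ⟨e, he, fun _ => hsub⟩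
      · exact ⟨1, one_pos, fun h => absurd h hξ⟩
    choose e he hesub using hchoice
    classical
    set F := hIf.toFinset with hF
    set εm : ℝ := if hne : F.Nonempty then F.inf' hne e else 1 with hεm
    have hεm0 : 0 < εm := by
      rw [hεm]
      split_ifs with hne
      · rw [Finset.lt_inf'_iff]
        exact fun i _ => he i
      · exact one_pos
    obtain ⟨y, hy, hyapp⟩ := contra_approx π hcont (StrongDual.toWeakDual.symm w) F (half_pos hεm0)
    refine ⟨StrongDual.toWeakDual y, ?_, ⟨y, hy, rfl⟩⟩
    refine hSsub (Set.mem_preimage.2 (httsub (Set.mem_pi.2 fun ξ hξ => ?_)))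
    have hξF : ξ ∈ F := hIf.mem_toFinset.2 hξ
    apply hesub ξ hξ
    rw [Metric.mem_ball]
    have h1 : ‖y ξ - (StrongDual.toWeakDual.symm w) ξ‖ ≤ εm / 2 := hyapp ξ hξF
    have h2 : εm ≤ e ξ := by
      rw [hεm, dif_pos ⟨ξ, hξF⟩]
      exact Finset.inf'_le e hξF
    have hdist : dist (topDualPairing ℂ X (StrongDual.toWeakDual y) ξ) (topDualPairing ℂ X w ξ)
        = ‖y ξ - (StrongDual.toWeakDual.symm w) ξ‖ := by
      rw [dist_eq_norm]
      rfl
    rw [hdist]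
    calc ‖y ξ - (StrongDual.toWeakDual.symm w) ξ‖ ≤ εm / 2 := h1
      _ < εm := half_lt_self hεm0
      _ ≤ e ξ := h2
end

section
/- Let P_n denote the n-th Legendre polynomial normalized by P_n(1) = 1. There is a constant C (one may take C = 4) such that for all n ≥ 0 and all δ ∈ [−1,1], |P_n(0) − P_n(δ)| ≤ C·|δ|^{1/2}. -/
set_option maxHeartbeats 1000000

/-- The Legendre polynomials, normalized by `P n 1 = 1`, defined by the recurrence
`(n+1) P_{n+1}(x) = (2n+1) x P_n(x) − n P_{n−1}(x)`, `P_0 = 1`, `P_1(x) = x`. -/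
noncomputable def legendreP : ℕ → ℝ → ℝ
  | 0, _ => 1
  | 1, x => x
  | n + 2, x =>
      ((2 * (n : ℝ) + 3) * x * legendreP (n + 1) x - ((n : ℝ) + 1) * legendreP n x)
        / ((n : ℝ) + 2)


open MeasureTheory intervalIntegral

noncomputable def Aa (x φ : ℝ) : ℂ :=
  (x : ℂ) + ((Real.sqrt (1 - x^2) * Real.cos φ : ℝ) : ℂ) * Complex.I

lemma contAa (x : ℝ) (n : ℕ) : Continuous fun φ : ℝ => (Aa x φ)^n := by
  unfold Aa; fun_prop

noncomputable def Lc (n : ℕ) (x : ℝ) : ℂ := ∫ φ in (0:ℝ)..Real.pi, (Aa x φ)^n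

lemma Lc_rec (n : ℕ) (x : ℝ) (hx : x^2 ≤ 1) :
    ((n:ℂ)+2) * Lc (n+2) x = (2*(n:ℂ)+3)*(x:ℂ)*(Lc (n+1) x) - ((n:ℂ)+1) * Lc n x := by
  set s : ℝ := Real.sqrt (1 - x^2) with hs
  have hs2 : ((s:ℝ) : ℂ)^2 = 1 - (x:ℂ)^2 := by
    rw [← Complex.ofReal_pow, Real.sq_sqrt (by linarith)]; push_cast; ring
  have key : ∀ φ : ℝ, HasDerivAt
      (fun φ : ℝ => (Complex.I * s * (Real.sin φ : ℂ)) * (Aa x φ)^(n+1))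
      (((n:ℂ)+2)*(Aa x φ)^(n+2) - (2*(n:ℂ)+3)*(x:ℂ)*(Aa x φ)^(n+1) + ((n:ℂ)+1)*(Aa x φ)^n) φ := by
    intro φ
    have hsin : HasDerivAt (fun φ : ℝ => ((Real.sin φ : ℝ) : ℂ)) ((Real.cos φ : ℝ) : ℂ) φ :=
      (Real.hasDerivAt_sin φ).ofReal_comp
    have hcos : HasDerivAt (fun φ : ℝ => ((s * Real.cos φ : ℝ) : ℂ)) ((-(s * Real.sin φ) : ℝ) : ℂ) φ := by
      have := ((Real.hasDerivAt_cos φ).const_mul s).ofReal_comp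
      simpa [mul_comm, mul_left_comm] using this
    have hA : HasDerivAt (fun φ : ℝ => Aa x φ) (((-(s * Real.sin φ) : ℝ) : ℂ) * Complex.I) φ := by
      unfold Aa
      exact (hcos.mul_const Complex.I).const_add _
    have h1 : HasDerivAt (fun φ : ℝ => (Aa x φ)^(n+1))
        (((n:ℂ)+1) * (Aa x φ)^n * (((-(s * Real.sin φ) : ℝ) : ℂ) * Complex.I)) φ := by
      have := (hasDerivAt_pow (n+1) (Aa x φ)).comp φ hA
      simpa [Function.comp_def] using this
    have h2 := ((hsin.const_mul (Complex.I * s)).mul h1)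
    refine h2.congr_deriv ?_
    symm
    have hAexp : Aa x φ = (x:ℂ) + (s:ℂ) * ((Real.cos φ:ℝ):ℂ) * Complex.I := by
      unfold Aa; simp only [Complex.ofReal_mul]; rfl
    have ht : ((Real.sin φ : ℝ) : ℂ)^2 = 1 - ((Real.cos φ : ℝ) : ℂ)^2 := by
      rw [← Complex.ofReal_pow, ← Complex.ofReal_pow]
      norm_cast
      nlinarith [Real.sin_sq_add_cos_sq φ]
    rw [hAexp]
    simp only [Complex.ofReal_neg, Complex.ofReal_mul, Nat.cast_add, Nat.cast_one]
    set c : ℂ := ((Real.cos φ : ℝ) : ℂ)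
    set t : ℂ := ((Real.sin φ : ℝ) : ℂ)
    set B : ℂ := ((x:ℂ) + (s:ℂ) * c * Complex.I)^n with hB
    linear_combination (((n:ℂ)+1)*B*Complex.I^2) * hs2 + (((n:ℂ)+1)*B*(s:ℂ)^2*Complex.I^2) * ht +
      (((n:ℂ)+1)*B*(1-(x:ℂ)^2)) * Complex.I_sq
  have hcont : ∀ m : ℕ, IntervalIntegrable (fun φ => (Aa x φ)^m) volume 0 Real.pi :=
    fun m => (contAa x m).intervalIntegrable _ _
  have hc : Continuous fun φ : ℝ =>
      ((n:ℂ)+2)*(Aa x φ)^(n+2) - (2*(n:ℂ)+3)*(x:ℂ)*(Aa x φ)^(n+1) + ((n:ℂ)+1)*(Aa x φ)^n :=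
    ((((continuous_const).mul (contAa x (n+2))).sub ((continuous_const).mul (contAa x (n+1)))).add
      ((continuous_const).mul (contAa x n)))
  have hint := intervalIntegral.integral_eq_sub_of_hasDerivAt (a := 0) (b := Real.pi)
    (fun φ _ => key φ) (hc.intervalIntegrable _ _)
  rw [intervalIntegral.integral_add ((((hcont (n+2)).const_mul _)).sub (((hcont (n+1)).const_mul _)))
      (((hcont n)).const_mul _),
    intervalIntegral.integral_sub (((hcont (n+2))).const_mul _) (((hcont (n+1))).const_mul _),
    intervalIntegral.integral_const_mul, intervalIntegral.integral_const_mul,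
    intervalIntegral.integral_const_mul] at hint
  simp only [Real.sin_pi, Real.sin_zero, Complex.ofReal_zero, mul_zero, zero_mul, sub_zero] at hint
  unfold Lc
  linear_combination hint

lemma Lc_zero (x : ℝ) : Lc 0 x = Real.pi := by
  unfold Lc
  simp

lemma Lc_one (x : ℝ) : Lc 1 x = Real.pi * x := by
  unfold Lc
  simp only [pow_one]
  unfold Aa
  rw [intervalIntegral.integral_add (intervalIntegrable_const)
    (Continuous.intervalIntegrable (by fun_prop) _ _)]
  rw [intervalIntegral.integral_mul_const]
  simp only [intervalIntegral.integral_const]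
  have : (∫ φ in (0:ℝ)..Real.pi, ((Real.sqrt (1 - x^2) * Real.cos φ : ℝ) : ℂ)) = 0 := by
    rw [intervalIntegral.integral_ofReal]
    simp [intervalIntegral.integral_const_mul, integral_cos]
  rw [this]
  simp [Complex.real_smul]

lemma legendre_eq(x : ℝ) (hx : x^2 ≤ 1) (n : ℕ) :
    legendreP n x = (Lc n x).re / Real.pi := by
  induction n using Nat.strong_induction_on with
  | _ n ih =>
    match n with
    | 0 => simp [legendreP, Lc_zero, div_self Real.pi_ne_zero]
    | 1 => simp [legendreP, Lc_one, Real.pi_ne_zero, mul_comm]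
    | (n+2) =>
      have h0 := ih n (by omega)
      have h1 := ih (n+1) (by omega)
      have hrec := Lc_rec n x hx
      have hre := congrArg Complex.re hrec
      simp only [Complex.mul_re, Complex.sub_re, Complex.add_re, Complex.ofReal_re,
        Complex.ofReal_im, Complex.natCast_re, Complex.natCast_im] at hre
      have hren : (((n:ℝ))+2) * (Lc (n+2) x).re =
          (2*(n:ℝ)+3)*x*(Lc (n+1) x).re - ((n:ℝ)+1) * (Lc n x).re := by
        have := congrArg Complex.re hrec
        push_cast at this ⊢
        simpa [Complex.add_re, Complex.sub_re, Complex.mul_re] using this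
      show ((2 * (n : ℝ) + 3) * x * legendreP (n + 1) x - ((n : ℝ) + 1) * legendreP n x)
        / ((n : ℝ) + 2) = (Lc (n+2) x).re / Real.pi
      rw [h0, h1]
      have hn2 : ((n:ℝ)+2) ≠ 0 := by positivity
      field_simp
      linear_combination (-1 : ℝ) * hren

lemma normAa_sq(x φ : ℝ) (hx : x^2 ≤ 1) :
    ‖Aa x φ‖^2 = 1 - (1-x^2) * Real.sin φ^2 := by
  have hre : (Aa x φ).re = x := by simp [Aa]
  have him : (Aa x φ).im = Real.sqrt (1-x^2) * Real.cos φ := by simp [Aa, ← Complex.ofReal_cos]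
  rw [Complex.sq_norm, Complex.normSq_apply, hre, him]
  have h1 : Real.sqrt (1-x^2)^2 = 1 - x^2 := Real.sq_sqrt (by linarith)
  have h2 : Real.cos φ^2 = 1 - Real.sin φ^2 := by nlinarith [Real.sin_sq_add_cos_sq φ]
  nlinarith [h1, h2]

lemma normAa_le_one (x φ : ℝ) (hx : x^2 ≤ 1) : ‖Aa x φ‖ ≤ 1 := by
  have h := normAa_sq x φ hx
  nlinarith [norm_nonneg (Aa x φ), sq_nonneg (Real.sin φ), sq_nonneg (1 - ‖Aa x φ‖)]

lemma normAa_le_exp (x φ : ℝ) (hx : x^2 ≤ 1) (hx' : 15/16 ≤ 1 - x^2) :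
    ‖Aa x φ‖ ≤ Real.exp (-(15/32) * Real.sin φ^2) := by
  have h := normAa_sq x φ hx
  have h2 : ‖Aa x φ‖^2 ≤ 1 - (15/16) * Real.sin φ^2 := by nlinarith [sq_nonneg (Real.sin φ)]
  have h3 : (1 : ℝ) - (15/16) * Real.sin φ^2 ≤ Real.exp (-(15/16) * Real.sin φ^2) := by
    have := Real.add_one_le_exp (-(15/16) * Real.sin φ^2)
    linarith
  have h4 : Real.exp (-(15/16) * Real.sin φ^2) = (Real.exp (-(15/32) * Real.sin φ^2))^2 := by
    rw [← Real.exp_nat_mul]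
    · ring_nf
  calc ‖Aa x φ‖ = Real.sqrt (‖Aa x φ‖^2) := by rw [Real.sqrt_sq (norm_nonneg _)]
    _ ≤ Real.sqrt ((Real.exp (-(15/32) * Real.sin φ^2))^2) := by
        apply Real.sqrt_le_sqrt; nlinarith
    _ = Real.exp (-(15/32) * Real.sin φ^2) := Real.sqrt_sq (Real.exp_pos _).le

lemma norm_pow_sub_pow' (a b : ℂ) (M : ℝ) (ha : ‖a‖ ≤ M) (hb : ‖b‖ ≤ M) :
    ∀ n : ℕ, ‖a^n - b^n‖ ≤ n * M^(n-1) * ‖a - b‖ := by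
  intro n
  induction n with
  | zero => simp
  | succ n ihn =>
    have hM : 0 ≤ M := le_trans (norm_nonneg a) ha
    have key : a^(n+1) - b^(n+1) = a * (a^n - b^n) + (a - b) * b^n := by ring
    rw [key]
    calc ‖a * (a^n - b^n) + (a - b) * b^n‖ ≤ ‖a * (a^n - b^n)‖ + ‖(a - b) * b^n‖ := norm_add_le _ _
      _ = ‖a‖ * ‖a^n - b^n‖ + ‖a - b‖ * ‖b‖^n := by rw [norm_mul, norm_mul, norm_pow]
      _ ≤ M * (n * M^(n-1) * ‖a - b‖) + ‖a - b‖ * M^n := by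
          gcongr
      _ ≤ ((n:ℝ)+1) * M^n * ‖a - b‖ := by
          rcases Nat.eq_zero_or_pos n with h | h
          · subst h; simp
          · have hMM : M * M^(n-1) = M^n := by
              rw [← pow_succ']
              congr 1
              omega
            have : M * ((n:ℝ) * M^(n-1) * ‖a - b‖) = (n:ℝ) * M^n * ‖a-b‖ := by
              rw [← hMM]; ring
            rw [this]
            nlinarith [norm_nonneg (a-b)]
      _ = ↑(n + 1) * M ^ (n + 1 - 1) * ‖a - b‖ := by push_cast; ring_nf

open Real in
lemma J_le(lam : ℝ) (hlam : 0 < lam) :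
    ∫ φ in (0:ℝ)..π, Real.exp (-lam * Real.sin φ^2) ≤ 3 / Real.sqrt lam := by
  have hπ := Real.pi_pos
  have hcont : ∀ a b : ℝ, IntervalIntegrable (fun φ : ℝ => Real.exp (-lam * Real.sin φ^2)) volume a b :=
    fun a b => (by fun_prop : Continuous fun φ : ℝ => Real.exp (-lam * Real.sin φ^2)).intervalIntegrable a b
  -- split
  have hsplit : ∫ φ in (0:ℝ)..π, Real.exp (-lam * Real.sin φ^2)
      = (∫ φ in (0:ℝ)..(π/2), Real.exp (-lam * Real.sin φ^2))
        + ∫ φ in (π/2:ℝ)..π, Real.exp (-lam * Real.sin φ^2) :=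
    (intervalIntegral.integral_add_adjacent_intervals (hcont _ _) (hcont _ _)).symm
  -- reflect second half
  have hrefl : (∫ φ in (π/2:ℝ)..π, Real.exp (-lam * Real.sin φ^2))
      = ∫ φ in (0:ℝ)..(π/2), Real.exp (-lam * Real.sin φ^2) := by
    have := intervalIntegral.integral_comp_sub_left (a := 0) (b := π/2)
      (fun φ : ℝ => Real.exp (-lam * Real.sin φ^2)) π
    simp only [Real.sin_pi_sub] at this
    rw [this]
    norm_num [show π - π/2 = π/2 from by ring]
  -- bound half integral
  have hhalf : (∫ φ in (0:ℝ)..(π/2), Real.exp (-lam * Real.sin φ^2))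
      ≤ ∫ φ in (0:ℝ)..(π/2), Real.exp (-(4*lam/π^2) * φ^2) := by
    apply intervalIntegral.integral_mono_on (by positivity)
      (hcont _ _)
      ((by fun_prop : Continuous fun φ : ℝ => Real.exp (-(4*lam/π^2) * φ^2)).intervalIntegrable _ _)
    intro φ hφ
    obtain ⟨h0, h1⟩ := hφ
    apply Real.exp_le_exp.mpr
    have hsin : 2/π * φ ≤ Real.sin φ := Real.mul_le_sin h0 h1
    have hp : (0:ℝ) ≤ 2/π*φ := by positivity
    have h2 : (2/π * φ)^2 ≤ Real.sin φ^2 := by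
      apply sq_le_sq' _ hsin
      linarith
    have e2 : lam * (2/π*φ)^2 = 4*lam/π^2*φ^2 := by field_simp; ring
    linarith [mul_le_mul_of_nonneg_left h2 hlam.le, e2]
  -- compare to Gaussian over Ioi
  have hgauss : (∫ φ in (0:ℝ)..(π/2), Real.exp (-(4*lam/π^2) * φ^2))
      ≤ Real.sqrt (π / (4*lam/π^2)) / 2 := by
    rw [intervalIntegral.integral_of_le (by positivity)]
    rw [← integral_gaussian_Ioi (4*lam/π^2)]
    apply setIntegral_mono_set
    · exact (integrable_exp_neg_mul_sq (by positivity)).integrableOn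
    · filter_upwards with t using (Real.exp_pos _).le
    · apply Filter.Eventually.of_forall
      intro t ht
      exact Set.Ioc_subset_Ioi_self ht
  have hval : Real.sqrt (π / (4*lam/π^2)) / 2 ≤ 3 / (2 * Real.sqrt lam) := by
    have h36 : π^3 ≤ 36 := by nlinarith [Real.pi_lt_d2, Real.pi_pos.le]
    have h1 : π / (4*lam/π^2) = π^3 / (4 * lam) := by field_simp
    rw [h1]
    have h2 : Real.sqrt (π^3/(4*lam)) ≤ Real.sqrt (9/lam) := by
      apply Real.sqrt_le_sqrt
      rw [div_le_div_iff₀ (by positivity) hlam]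
      nlinarith
    have h3 : Real.sqrt (9/lam) = 3 / Real.sqrt lam := by
      rw [Real.sqrt_div (by norm_num : (0:ℝ) ≤ 9), show (9:ℝ) = 3^2 by norm_num,
        Real.sqrt_sq (by norm_num : (0:ℝ) ≤ 3)]
    calc Real.sqrt (π^3/(4*lam)) / 2 ≤ Real.sqrt (9/lam) / 2 := by linarith
      _ = 3 / (2 * Real.sqrt lam) := by rw [h3]; ring
  rw [hsplit, hrefl]
  have hs : 0 < Real.sqrt lam := Real.sqrt_pos.mpr hlam
  calc (∫ φ in (0:ℝ)..(π/2), Real.exp (-lam * Real.sin φ^2))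
        + (∫ φ in (0:ℝ)..(π/2), Real.exp (-lam * Real.sin φ^2))
      ≤ (Real.sqrt (π / (4*lam/π^2)) / 2) + (Real.sqrt (π / (4*lam/π^2)) / 2) := by
        have := le_trans hhalf hgauss; linarith
    _ ≤ 3 / (2*Real.sqrt lam) + 3 / (2*Real.sqrt lam) := by linarith [hval]
    _ = 3 / Real.sqrt lam := by field_simp; ring

open Real in
lemma contAan(x : ℝ) (n : ℕ) : Continuous fun φ : ℝ => ‖Aa x φ‖^n :=
  ((contAa x 1).norm.pow n).congr (by intro φ; simp)

open Real in
lemma intAa_le (x : ℝ) (m : ℕ) (hm : 1 ≤ m) (hx : x^2 ≤ 1) (hx' : 15/16 ≤ 1 - x^2) :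
    ∫ φ in (0:ℝ)..π, ‖Aa x φ‖^m ≤ (22/5) / Real.sqrt m := by
  have hmpos : (0:ℝ) < m := by exact_mod_cast hm
  have hlam : (0:ℝ) < 15/32 * m := by positivity
  have step1 : ∫ φ in (0:ℝ)..π, ‖Aa x φ‖^m
      ≤ ∫ φ in (0:ℝ)..π, Real.exp (-(15/32 * m) * Real.sin φ^2) := by
    apply intervalIntegral.integral_mono_on Real.pi_pos.le
      ((contAan x m).intervalIntegrable _ _)
      ((by fun_prop : Continuous fun φ : ℝ => Real.exp (-(15/32*m) * Real.sin φ^2)).intervalIntegrable _ _)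
    intro φ _
    calc ‖Aa x φ‖^m ≤ (Real.exp (-(15/32) * Real.sin φ^2))^m :=
          pow_le_pow_left₀ (norm_nonneg _) (normAa_le_exp x φ hx hx') m
      _ = Real.exp (-(15/32 * m) * Real.sin φ^2) := by
          rw [← Real.exp_nat_mul]; ring_nf
  have step2 := J_le (15/32 * m) hlam
  have step3 : 3 / Real.sqrt (15/32 * m) ≤ (22/5) / Real.sqrt m := by
    rw [Real.sqrt_mul (by norm_num : (0:ℝ) ≤ 15/32)]
    have h1 : (15:ℝ)/22 ≤ Real.sqrt (15/32) := by
      nlinarith [Real.sq_sqrt (show (0:ℝ) ≤ 15/32 by norm_num),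
        Real.sqrt_nonneg (15/32 : ℝ)]
    have h2 : (0:ℝ) < Real.sqrt m := Real.sqrt_pos.mpr hmpos
    rw [div_le_div_iff₀ (by positivity) (by positivity)]
    nlinarith [h2, h1]
  linarith

open Real in
lemma Lc_re_abs_le (x : ℝ) (n : ℕ) (hx : x^2 ≤ 1) :
    |(Lc n x).re| ≤ ∫ φ in (0:ℝ)..π, ‖Aa x φ‖^n := by
  have h1 : |(Lc n x).re| ≤ ‖Lc n x‖ := Complex.abs_re_le_norm _
  have h2 : ‖Lc n x‖ ≤ ∫ φ in (0:ℝ)..π, ‖(Aa x φ)^n‖ :=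
    intervalIntegral.norm_integral_le_integral_norm Real.pi_pos.le
  simp only [norm_pow] at h2
  linarith

open Real in
lemma legendre_abs_le_one (x : ℝ) (n : ℕ) (hx : x^2 ≤ 1) : |legendreP n x| ≤ 1 := by
  rw [legendre_eq x hx n, abs_div, abs_of_pos Real.pi_pos]
  rw [div_le_one Real.pi_pos]
  calc |(Lc n x).re| ≤ ∫ φ in (0:ℝ)..π, ‖Aa x φ‖^n := Lc_re_abs_le x n hx
    _ ≤ ∫ φ in (0:ℝ)..π, 1 := by
        apply intervalIntegral.integral_mono_on Real.pi_pos.le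
          ((contAan x n).intervalIntegrable _ _) (intervalIntegrable_const)
        intro φ _
        exact pow_le_one₀ (norm_nonneg _) (normAa_le_one x φ hx)
    _ = Real.pi := by simp

open Real in
/-- there is a constant `C` (one may take `C = 4`) such that
`|P_n(0) − P_n(δ)| ≤ C |δ|^{1/2}` for all `n ≥ 0` and all `δ ∈ [−1,1]`. -/
theorem stmt11 :
    ∃ C : ℝ, C = 4 ∧ ∀ (n : ℕ), ∀ δ ∈ Set.Icc (-1 : ℝ) 1,
      |legendreP n 0 - legendreP n δ| ≤ C * Real.sqrt |δ| := by
  refine ⟨4, rfl, ?_⟩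
  intro n δ hδ
  obtain ⟨hδ1, hδ2⟩ := hδ
  have hd0 : 0 ≤ |δ| := abs_nonneg δ
  have hd1 : |δ| ≤ 1 := abs_le.mpr ⟨hδ1, hδ2⟩
  have hδsq : δ^2 ≤ 1 := by nlinarith [sq_abs δ]
  have h0sq : (0:ℝ)^2 ≤ 1 := by norm_num
  have hsq0 : (0:ℝ) ≤ Real.sqrt |δ| := Real.sqrt_nonneg _
  have hπ := Real.pi_pos
  have hπ3 := Real.pi_gt_three
  by_cases hcase : (1:ℝ)/4 ≤ |δ|
  · -- big δ
    have b1 := legendre_abs_le_one 0 n h0sq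
    have b2 := legendre_abs_le_one δ n hδsq
    have h14 : (1:ℝ)/2 ≤ Real.sqrt |δ| := by
      rw [show (1:ℝ)/2 = Real.sqrt (1/4) by
        rw [show (1:ℝ)/4 = (1/2)^2 by norm_num, Real.sqrt_sq]; norm_num]
      exact Real.sqrt_le_sqrt hcase
    calc |legendreP n 0 - legendreP n δ| ≤ |legendreP n 0| + |legendreP n δ| := abs_sub _ _
      _ ≤ 2 := by linarith
      _ ≤ 4 * Real.sqrt |δ| := by linarith
  · push_neg at hcase
    have hδ2' : δ^2 ≤ 1/16 := by nlinarith [sq_abs δ]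
    have hδ15 : 15/16 ≤ 1 - δ^2 := by linarith
    have h015 : (15:ℝ)/16 ≤ 1 - (0:ℝ)^2 := by norm_num
    match n with
    | 0 => simp [legendreP]
    | 1 =>
      have : |legendreP 1 0 - legendreP 1 δ| = |δ| := by simp [legendreP]
      rw [this]
      have : |δ| ≤ Real.sqrt |δ| := by
        nlinarith [Real.sq_sqrt hd0, Real.sqrt_nonneg |δ|, hd1]
      linarith
    | (m+2) =>
      set n : ℕ := m + 2 with hn
      have hn2 : 2 ≤ n := by omega
      have hnR : (2:ℝ) ≤ (n:ℝ) := by exact_mod_cast hn2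
      -- pointwise difference bound
      have hAle : ∀ φ : ℝ, ‖Aa 0 φ‖ ≤ ‖Aa δ φ‖ := by
        intro φ
        have h1 := normAa_sq 0 φ h0sq
        have h2 := normAa_sq δ φ hδsq
        nlinarith [norm_nonneg (Aa 0 φ), norm_nonneg (Aa δ φ), sq_nonneg (Real.sin φ), sq_nonneg δ,
          mul_nonneg (sq_nonneg δ) (sq_nonneg (Real.sin φ))]
      have hABdiff : ∀ φ : ℝ, ‖Aa 0 φ - Aa δ φ‖ ≤ (5/4) * |δ| := by
        intro φ
        have hsub : Aa 0 φ - Aa δ φ =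
            ((-δ : ℝ) : ℂ) + (((Real.sqrt (1 - 0^2) - Real.sqrt (1 - δ^2)) * Real.cos φ : ℝ) : ℂ) * Complex.I := by
          unfold Aa; push_cast; ring
        rw [hsub]
        have hb : ‖(((Real.sqrt (1 - 0^2) - Real.sqrt (1 - δ^2)) * Real.cos φ : ℝ) : ℂ) * Complex.I‖
            = |(Real.sqrt (1 - 0^2) - Real.sqrt (1 - δ^2)) * Real.cos φ| := by
          rw [norm_mul, Complex.norm_I, mul_one, Complex.norm_real, Real.norm_eq_abs]
        have hsqrt1 : Real.sqrt (1 - 0^2) = 1 := by norm_num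
        have hsd : 1 - δ^2 ≤ Real.sqrt (1 - δ^2) := by
          nlinarith [Real.sq_sqrt (show (0:ℝ) ≤ 1 - δ^2 by nlinarith), Real.sqrt_nonneg (1-δ^2),
            Real.sqrt_le_one.mpr (show 1 - δ^2 ≤ 1 by nlinarith)]
        have hsd2 : Real.sqrt (1 - δ^2) ≤ 1 := Real.sqrt_le_one.mpr (by nlinarith)
        calc ‖((-δ : ℝ) : ℂ) + (((Real.sqrt (1 - 0^2) - Real.sqrt (1 - δ^2)) * Real.cos φ : ℝ) : ℂ) * Complex.I‖
            ≤ ‖((-δ : ℝ) : ℂ)‖ + ‖(((Real.sqrt (1 - 0^2) - Real.sqrt (1 - δ^2)) * Real.cos φ : ℝ) : ℂ) * Complex.I‖ := norm_add_le _ _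
          _ ≤ |δ| + |(Real.sqrt (1 - 0^2) - Real.sqrt (1 - δ^2)) * Real.cos φ| := by
              rw [hb, Complex.norm_real, Real.norm_eq_abs, abs_neg]
          _ ≤ |δ| + δ^2 := by
              rw [abs_mul, hsqrt1]
              have h1 : |1 - Real.sqrt (1 - δ^2)| ≤ δ^2 := by
                rw [abs_of_nonneg (by linarith)]; linarith
              have h2 : |Real.cos φ| ≤ 1 := Real.abs_cos_le_one φ
              nlinarith [abs_nonneg (1 - Real.sqrt (1-δ^2))]
          _ ≤ (5/4) * |δ| := by nlinarith [sq_abs δ]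
      have hdiffLc : |legendreP n 0 - legendreP n δ|
          ≤ (1/Real.pi) * ((n:ℝ) * ((5/4) * |δ|) * ∫ φ in (0:ℝ)..π, ‖Aa δ φ‖^(n-1)) := by
        rw [legendre_eq 0 h0sq n, legendre_eq δ hδsq n]
        rw [div_sub_div_same, abs_div, abs_of_pos hπ]
        rw [div_eq_mul_one_div, mul_comm]
        apply mul_le_mul_of_nonneg_left _ (by positivity)
        have h1 : (Lc n 0).re - (Lc n δ).re = (Lc n 0 - Lc n δ).re := by simp
        rw [h1]
        have h2 : |(Lc n 0 - Lc n δ).re| ≤ ‖Lc n 0 - Lc n δ‖ := Complex.abs_re_le_norm _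
        have h3 : Lc n 0 - Lc n δ = ∫ φ in (0:ℝ)..π, ((Aa 0 φ)^n - (Aa δ φ)^n) := by
          unfold Lc
          rw [intervalIntegral.integral_sub ((contAa 0 n).intervalIntegrable _ _)
            ((contAa δ n).intervalIntegrable _ _)]
        have h4 : ‖Lc n 0 - Lc n δ‖ ≤ ∫ φ in (0:ℝ)..π, ‖(Aa 0 φ)^n - (Aa δ φ)^n‖ := by
          rw [h3]
          exact intervalIntegral.norm_integral_le_integral_norm Real.pi_pos.le
        have h5 : ∫ φ in (0:ℝ)..π, ‖(Aa 0 φ)^n - (Aa δ φ)^n‖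
            ≤ ∫ φ in (0:ℝ)..π, (n:ℝ) * ((5/4) * |δ|) * ‖Aa δ φ‖^(n-1) := by
          apply intervalIntegral.integral_mono_on Real.pi_pos.le
          · exact (((contAa 0 n).sub (contAa δ n)).norm).intervalIntegrable _ _
          · exact ((continuous_const.mul (contAan δ (n-1)))).intervalIntegrable _ _
          intro φ _
          have hnn : (0:ℝ) ≤ (n:ℝ) * ‖Aa δ φ‖^(n-1) := by positivity
          have hstep := mul_le_mul_of_nonneg_left (hABdiff φ) hnn
          have e : (n:ℝ) * ((5/4) * |δ|) * ‖Aa δ φ‖^(n-1)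
              = (n:ℝ) * ‖Aa δ φ‖^(n-1) * ((5/4) * |δ|) := by ring
          rw [e]
          exact le_trans (norm_pow_sub_pow' _ _ _ (hAle φ) le_rfl n)
            (by rw [mul_assoc]; exact le_trans (le_of_eq (by ring)) hstep)
        rw [intervalIntegral.integral_const_mul] at h5
        linarith
      have hint := intAa_le δ (n-1) (by omega) hδsq hδ15
      have hsqn1 : (0:ℝ) < Real.sqrt ((n:ℝ) - 1) := by
        apply Real.sqrt_pos.mpr; linarith
      have hcast : ((n-1 : ℕ) : ℝ) = (n:ℝ) - 1 := by
        push_cast [Nat.cast_sub (by omega : 1 ≤ n)]; ring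
      rw [hcast] at hint
      by_cases hnd : (n:ℝ) * |δ| ≤ 1
      · -- small nδ
        have hIpos : (0:ℝ) ≤ ∫ φ in (0:ℝ)..π, ‖Aa δ φ‖^(n-1) := by
          apply intervalIntegral.integral_nonneg Real.pi_pos.le
          intro φ _; positivity
        have key : |legendreP n 0 - legendreP n δ|
            ≤ (1/Real.pi) * ((n:ℝ) * ((5/4) * |δ|) * ((22/5) / Real.sqrt ((n:ℝ)-1))) := by
          refine le_trans hdiffLc ?_
          apply mul_le_mul_of_nonneg_left _ (by positivity)
          apply mul_le_mul_of_nonneg_left hint (by positivity)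
        -- now arithmetic: (1/π) * n * (5/4) d * (22/5) / √(n-1) ≤ 4 √d
        have ha1 : (n:ℝ) / Real.sqrt ((n:ℝ)-1) ≤ Real.sqrt 2 * Real.sqrt (n:ℝ) := by
          rw [div_le_iff₀ hsqn1]
          have e0 : (n:ℝ) = Real.sqrt ((n:ℝ)^2) := (Real.sqrt_sq (by positivity)).symm
          calc (n:ℝ) = Real.sqrt ((n:ℝ)^2) := e0
            _ ≤ Real.sqrt (2*(n:ℝ)*((n:ℝ)-1)) := Real.sqrt_le_sqrt (by nlinarith)
            _ = Real.sqrt 2 * Real.sqrt (n:ℝ) * Real.sqrt ((n:ℝ)-1) := by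
                rw [show 2*(n:ℝ)*((n:ℝ)-1) = (2*(n:ℝ))*((n:ℝ)-1) by ring,
                  Real.sqrt_mul (by positivity), Real.sqrt_mul (by norm_num)]
        have ha2 : Real.sqrt (n:ℝ) * |δ| ≤ Real.sqrt |δ| := by
          have e2 := Real.sq_sqrt (show (0:ℝ) ≤ (n:ℝ) by positivity)
          have e4 := Real.sq_sqrt hd0
          have hsn := Real.sqrt_nonneg ((n:ℝ))
          have ha : Real.sqrt (n:ℝ) * Real.sqrt |δ| ≤ 1 := by
            nlinarith [mul_nonneg hsn hsq0]
          calc Real.sqrt (n:ℝ) * |δ| = (Real.sqrt (n:ℝ) * Real.sqrt |δ|) * Real.sqrt |δ| := by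
                rw [mul_assoc, ← sq]; rw [e4]
            _ ≤ 1 * Real.sqrt |δ| := mul_le_mul_of_nonneg_right ha hsq0
            _ = Real.sqrt |δ| := one_mul _
        have hsqrt2 : Real.sqrt 2 ≤ 1.5 := by
          nlinarith [Real.sq_sqrt (show (0:ℝ) ≤ 2 by norm_num), Real.sqrt_nonneg (2:ℝ)]
        -- combine
        have hfin : (1/Real.pi) * ((n:ℝ) * ((5/4) * |δ|) * ((22/5) / Real.sqrt ((n:ℝ)-1)))
            ≤ 4 * Real.sqrt |δ| := by
          have e5 : (1/Real.pi) * ((n:ℝ) * ((5/4) * |δ|) * ((22/5) / Real.sqrt ((n:ℝ)-1)))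
              = (11/(2*Real.pi)) * (((n:ℝ)/Real.sqrt ((n:ℝ)-1)) * |δ|) := by
            field_simp; ring
          rw [e5]
          have h6 : ((n:ℝ)/Real.sqrt ((n:ℝ)-1)) * |δ| ≤ Real.sqrt 2 * (Real.sqrt (n:ℝ) * |δ|) := by
            nlinarith [mul_le_mul_of_nonneg_right ha1 hd0]
          have h7 : Real.sqrt 2 * (Real.sqrt (n:ℝ) * |δ|) ≤ 1.5 * Real.sqrt |δ| := by
            nlinarith [ha2, Real.sqrt_nonneg (2:ℝ), Real.sqrt_nonneg ((n:ℝ)),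
              mul_nonneg (Real.sqrt_nonneg ((n:ℝ))) hd0]
          have h8 : (11/(2*Real.pi)) ≤ 11/6 := by
            rw [div_le_div_iff₀ (by positivity) (by norm_num)]
            nlinarith
          have h9 : (0:ℝ) ≤ ((n:ℝ)/Real.sqrt ((n:ℝ)-1)) * |δ| := by positivity
          nlinarith [h6, h7, h8, h9, hsq0]
        linarith
      · -- large nδ
        push_neg at hnd
        have hintn0 := intAa_le 0 n (by omega) h0sq (by norm_num)
        have hintnδ := intAa_le δ n (by omega) hδsq hδ15
        have b1 : |(Lc n 0).re| ≤ (22/5)/Real.sqrt (n:ℝ) :=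
          le_trans (Lc_re_abs_le 0 n h0sq) hintn0
        have b2 : |(Lc n δ).re| ≤ (22/5)/Real.sqrt (n:ℝ) :=
          le_trans (Lc_re_abs_le δ n hδsq) hintnδ
        have hsqn : (0:ℝ) < Real.sqrt (n:ℝ) := Real.sqrt_pos.mpr (by linarith)
        have hinv : 1/Real.sqrt (n:ℝ) ≤ Real.sqrt |δ| := by
          have e2 := Real.sq_sqrt (show (0:ℝ) ≤ (n:ℝ) by positivity)
          have e4 := Real.sq_sqrt hd0
          rw [div_le_iff₀ hsqn]
          nlinarith [Real.sqrt_nonneg |δ|, mul_nonneg hsq0 hsqn.le,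
            sq_nonneg (Real.sqrt |δ| * Real.sqrt (n:ℝ) - 1)]
        rw [legendre_eq 0 h0sq n, legendre_eq δ hδsq n]
        have habs : |(Lc n 0).re / Real.pi - (Lc n δ).re / Real.pi|
            ≤ (|(Lc n 0).re| + |(Lc n δ).re|)/Real.pi := by
          rw [div_sub_div_same, abs_div, abs_of_pos hπ]
          exact div_le_div_of_nonneg_right (abs_sub _ _) hπ.le
        have : (|(Lc n 0).re| + |(Lc n δ).re|)/Real.pi ≤ (44/5)/(Real.pi * Real.sqrt (n:ℝ)) := by
          rw [div_le_div_iff₀ hπ (by positivity)]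
          have : |(Lc n 0).re| + |(Lc n δ).re| ≤ (44/5)/Real.sqrt (n:ℝ) := by
            have e : (44:ℝ)/5/Real.sqrt (n:ℝ) = 22/5/Real.sqrt (n:ℝ) + 22/5/Real.sqrt (n:ℝ) := by
              ring
            linarith [e]
          calc (|(Lc n 0).re| + |(Lc n δ).re|) * (Real.pi * Real.sqrt (n:ℝ))
              ≤ ((44/5)/Real.sqrt (n:ℝ)) * (Real.pi * Real.sqrt (n:ℝ)) := by
                apply mul_le_mul_of_nonneg_right this (by positivity)
            _ = 44/5 * Real.pi := by field_simp
          
        have hfin : (44/5)/(Real.pi * Real.sqrt (n:ℝ)) ≤ 4 * Real.sqrt |δ| := by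
          rw [div_le_iff₀ (by positivity)]
          have h2 : 1 ≤ Real.sqrt (n:ℝ) * Real.sqrt |δ| := by
            have := mul_le_mul_of_nonneg_right hinv hsqn.le
            rw [div_mul_cancel₀] at this
            · linarith [mul_comm (Real.sqrt |δ|) (Real.sqrt (n:ℝ))]
            · exact ne_of_gt hsqn
          nlinarith [hsq0, hsqn.le]
        linarith
end
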